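/- Let Δ ≥ 2. The epidemic region of the infinite Δ-regular tree is exactly Ω_{T_Δ} = {(q, r) : q, r > 0, r ≥ ((Δ−1)/Δ)q, q ≤ 1/Δ} ∪ {(q, r) : q, r > 0, 2q + Δr ≤ 1}. -/

import Mathlib

namespace Contagion

open scoped BigOperators

/-- The three strategies in the contagion game. -/
inductive Strat
  | A | B | AB
deriving DecidableEq

/-- Pairwise payoff to a player using the first strategy against a neighbor
using the second strategy, in the contagion game with parameters `q, r`. -/
noncomputable def pairPayoff (q r : ℝ) : Strat → Strat → ℝ
  | .A, .A => 1 - q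
  | .A, .B => 0
  | .A, .AB => 1 - q
  | .B, .A => 0
  | .B, .B => q
  | .B, .AB => q
  | .AB, .A => 1 - q - r
  | .AB, .B => q - r
  | .AB, .AB => max q (1 - q) - r

variable {V : Type*}

/-- Total payoff to vertex `v` for playing strategy `s` against profile `σ`. -/
noncomputable def totalPayoff (G : SimpleGraph V) (q r : ℝ) (σ : V → Strat)
    (v : V) (s : Strat) : ℝ :=
  ∑ᶠ u ∈ G.neighborSet v, pairPayoff q r s (σ u)

/-- `s` is a best response of vertex `v` to the profile `σ`. -/
def IsBestResponse (G : SimpleGraph V) (q r : ℝ) (σ : V → Strat) (v : V) (s : Strat) : Prop :=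
  ∀ s' : Strat, totalPayoff G q r σ v s' ≤ totalPayoff G q r σ v s

/-- Strategy `A` becomes epidemic in the contagion game `(G, q, r)`:
there are a finite initial set `S₀` (playing `A`, everybody else playing `B`) and a
sequence `α` of vertices in which every vertex appears at least once, such that updating
at step `n` the vertex `α n` to a best response makes every vertex eventually adopt `A`. -/
def Epidemic (G : SimpleGraph V) (q r : ℝ) : Prop :=
  ∃ (S₀ : Set V) (α : ℕ → V) (σ : ℕ → V → Strat),
    S₀.Finite ∧
    Function.Surjective α ∧
    (∀ v ∈ S₀, σ 0 v = Strat.A) ∧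
    (∀ v ∉ S₀, σ 0 v = Strat.B) ∧
    (∀ n, IsBestResponse G q r (σ n) (α n) (σ (n + 1) (α n))) ∧
    (∀ n v, v ≠ α n → σ (n + 1) v = σ n v) ∧
    (∀ v, ∃ n, σ n v = Strat.A)

/-- The epidemic region `Ω_G ⊆ ℝ²` of `G`. -/
def epidemicRegion (G : SimpleGraph V) : Set (ℝ × ℝ) :=
  {p | 0 < p.1 ∧ p.1 < 1 ∧ 0 < p.2 ∧ Epidemic G p.1 p.2}

/-- `G` is `Δ`-regular: every vertex has exactly `Δ` neighbors. -/
def IsRegular (G : SimpleGraph V) (Δ : ℕ) : Prop :=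
  ∀ v, (G.neighborSet v).ncard = Δ

/-- The number of neighbors of `v` lying in the set `S`. -/
noncomputable def degIn (G : SimpleGraph V) (v : V) (S : Set V) : ℕ :=
  (G.neighborSet v ∩ S).ncard

/-- `RT Δ`: the infinite rooted tree in which the root (the empty list) has `Δ - 1`
children and every other vertex also has `Δ - 1` children (hence degree `Δ`). -/
def RT (Δ : ℕ) : SimpleGraph (List (Fin (Δ - 1))) :=
  SimpleGraph.fromRel (fun l l' => ∃ a : Fin (Δ - 1), l' = a :: l)

/-- `G` contains a subgraph isomorphic to `RT Δ`. -/
def HasRTCopy (Δ : ℕ) (G : SimpleGraph V) : Prop :=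
  ∃ f : List (Fin (Δ - 1)) → V,
    Function.Injective f ∧ ∀ x y, (RT Δ).Adj x y → G.Adj (f x) (f y)

/-- The thick half line `HL_Δ` (for even `Δ`), columns indexed by `ℕ` starting with the
first column `0`; `(k, i)` and `(l, j)` are adjacent exactly when `|k - l| = 1`. -/
def HL (Δ : ℕ) : SimpleGraph (ℕ × Fin (Δ / 2)) :=
  SimpleGraph.fromRel (fun x y => y.1 = x.1 + 1)

/-- The epidemic region of the infinite `Δ`-regular tree:
`{(q,r) : q,r > 0, r ≥ ((Δ-1)/Δ)q, q ≤ 1/Δ} ∪ {(q,r) : q,r > 0, 2q + Δr ≤ 1}`. -/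
def treeRegion (Δ : ℕ) : Set (ℝ × ℝ) :=
  {p | 0 < p.1 ∧ 0 < p.2 ∧ ((Δ : ℝ) - 1) / Δ * p.1 ≤ p.2 ∧ p.1 ≤ 1 / Δ} ∪
  {p | 0 < p.1 ∧ 0 < p.2 ∧ 2 * p.1 + Δ * p.2 ≤ 1}

/-- The epidemic region of the thick line `L_Δ`:
`{(q,r) : 0 < q ≤ 1/2, r ≥ q/2} ∪ {(q,r) : q,r > 0, r ≤ q/2, 2q + 2r ≤ 1}`. -/
def thickLineRegion : Set (ℝ × ℝ) :=
  {p | 0 < p.1 ∧ p.1 ≤ 1 / 2 ∧ p.1 / 2 ≤ p.2} ∪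
  {p | 0 < p.1 ∧ 0 < p.2 ∧ p.2 ≤ p.1 / 2 ∧ 2 * p.1 + 2 * p.2 ≤ 1}

/-- `(SAB, SB)` is a blocking structure for the contagion game `(G, q, r)`
on a `Δ`-regular graph `G`. -/
def IsBlockingStructure (G : SimpleGraph V) (Δ : ℕ) (q r : ℝ) (SAB SB : Set V) : Prop :=
  Disjoint SAB SB ∧ (SAB.Nonempty ∨ SB.Nonempty) ∧
  (∀ v ∈ SAB, r / q * Δ < (degIn G v SB : ℝ)) ∧
  ∀ v ∈ SB,
    (1 - q - r) * Δ < (1 - q) * (degIn G v SB : ℝ) + min q (1 - q) * (degIn G v SAB : ℝ) ∧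
    (1 - q) * Δ < (degIn G v SB : ℝ) + q * (degIn G v SAB : ℝ)

/-- The two strategies of the `A`-`B` coordination game. -/
inductive CStrat
  | A | B
deriving DecidableEq

/-- Pairwise payoff in the `A`-`B` coordination game `(G, q)`. -/
noncomputable def cPairPayoff (q : ℝ) : CStrat → CStrat → ℝ
  | .A, .A => 1 - q
  | .A, .B => 0
  | .B, .A => 0
  | .B, .B => q

/-- Total payoff to `v` for playing `s` against profile `σ` in the coordination game. -/
noncomputable def cTotalPayoff (G : SimpleGraph V) (q : ℝ) (σ : V → CStrat)
    (v : V) (s : CStrat) : ℝ :=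
  ∑ᶠ u ∈ G.neighborSet v, cPairPayoff q s (σ u)

/-- `s` is a best response of `v` to `σ` in the coordination game. -/
def CIsBestResponse (G : SimpleGraph V) (q : ℝ) (σ : V → CStrat) (v : V) (s : CStrat) : Prop :=
  ∀ s' : CStrat, cTotalPayoff G q σ v s' ≤ cTotalPayoff G q σ v s

/-- Strategy `A` becomes epidemic in the coordination game `(G, q)` starting from the
initial set `S₀`. -/
def CoordEpidemicFrom (G : SimpleGraph V) (q : ℝ) (S₀ : Set V) : Prop :=
  ∃ (α : ℕ → V) (σ : ℕ → V → CStrat),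
    Function.Surjective α ∧
    (∀ v ∈ S₀, σ 0 v = CStrat.A) ∧
    (∀ v ∉ S₀, σ 0 v = CStrat.B) ∧
    (∀ n, CIsBestResponse G q (σ n) (α n) (σ (n + 1) (α n))) ∧
    (∀ n v, v ≠ α n → σ (n + 1) v = σ n v) ∧
    (∀ v, ∃ n, σ n v = CStrat.A)

/-- Strategy `A` becomes epidemic in the coordination game `(G, q)`. -/
def CoordEpidemic (G : SimpleGraph V) (q : ℝ) : Prop :=
  ∃ S₀ : Set V, S₀.Finite ∧ CoordEpidemicFrom G q S₀

lemma neighborSet_finite {G : SimpleGraph V} {Δ : ℕ} (hΔ : 2 ≤ Δ) (hReg : IsRegular G Δ)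
    (v : V) : (G.neighborSet v).Finite := by
  by_contra h
  have h' : (G.neighborSet v).Infinite := h
  have := h'.ncard
  rw [hReg v] at this
  omega

lemma totalPayoff_eq_sum {G : SimpleGraph V} {q r : ℝ} {σ : V → Strat} {v : V}
    (h : (G.neighborSet v).Finite) (s : Strat) :
    totalPayoff G q r σ v s = ∑ u ∈ h.toFinset, pairPayoff q r s (σ u) :=
  finsum_mem_eq_finite_toFinset_sum _ h

/-- Payoff when all neighbors play the constant strategy `c`. -/
lemma totalPayoff_const {G : SimpleGraph V} {Δ : ℕ} (hΔ : 2 ≤ Δ) (hReg : IsRegular G Δ)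
    {q r : ℝ} {σ : V → Strat} {v : V} {c : Strat}
    (hc : ∀ u, G.Adj v u → σ u = c) (s : Strat) :
    totalPayoff G q r σ v s = (Δ : ℝ) * pairPayoff q r s c := by
  have hfin := neighborSet_finite hΔ hReg v
  rw [totalPayoff_eq_sum hfin]
  rw [Finset.sum_congr rfl (fun u hu => by
    rw [hc u (by simpa using (Set.Finite.mem_toFinset hfin).1 hu)])]
  rw [Finset.sum_const, nsmul_eq_mul]
  congr 1
  rw [← hReg v, Set.ncard_eq_toFinset_card _ hfin]

/-- Payoff when all neighbors except the distinguished neighbor `p` play `c`. -/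
lemma totalPayoff_split {G : SimpleGraph V} {Δ : ℕ} (hΔ : 2 ≤ Δ) (hReg : IsRegular G Δ)
    {q r : ℝ} {σ : V → Strat} {v p : V} (hp : G.Adj v p) {c : Strat}
    (hc : ∀ u, G.Adj v u → u ≠ p → σ u = c) (s : Strat) :
    totalPayoff G q r σ v s
      = pairPayoff q r s (σ p) + ((Δ : ℝ) - 1) * pairPayoff q r s c := by
  classical
  have hfin := neighborSet_finite hΔ hReg v
  rw [totalPayoff_eq_sum hfin]
  have hpmem : p ∈ hfin.toFinset := by simp [hp]
  rw [← Finset.add_sum_erase _ _ hpmem]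
  congr 1
  rw [Finset.sum_congr rfl (fun u hu => by
    have h1 := Finset.mem_erase.1 hu
    rw [hc u (by simpa using (Set.Finite.mem_toFinset hfin).1 h1.2) h1.1])]
  rw [Finset.sum_const, nsmul_eq_mul]
  congr 1
  rw [Finset.card_erase_of_mem hpmem]
  have : hfin.toFinset.card = Δ := by rw [← hReg v, Set.ncard_eq_toFinset_card _ hfin]
  rw [this]
  have : (1:ℕ) ≤ Δ := by omega
  push_cast [Nat.cast_sub this]
  ring

section Tree

variable {W : Type*} {T : SimpleGraph W}

open SimpleGraph Walk in
lemma path_length_eq (hConn : T.Connected) (hAcyc : T.IsAcyclic) {w₀ v : W}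
    (p : T.Walk w₀ v) (hp : p.IsPath) : p.length = T.dist w₀ v := by
  classical
  obtain ⟨q, hq⟩ := (hConn w₀ v).exists_walk_length_eq_dist
  have h1 : q.bypass.IsPath := q.bypass_isPath
  have h2 : p = q.bypass :=
    congrArg Subtype.val ((SimpleGraph.isAcyclic_iff_path_unique.mp hAcyc) ⟨p, hp⟩ ⟨q.bypass, h1⟩)
  have h3 : q.bypass.length ≤ q.length := q.length_bypass_le
  have h4 : T.dist w₀ v ≤ q.bypass.length := SimpleGraph.dist_le _
  rw [h2]
  omega

lemma exists_shortest_path (hConn : T.Connected) (hAcyc : T.IsAcyclic) (w₀ v : W) :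
    ∃ p : T.Walk w₀ v, p.IsPath ∧ p.length = T.dist w₀ v := by
  classical
  obtain ⟨q, _⟩ := (hConn w₀ v).exists_walk_length_eq_dist
  exact ⟨q.bypass, q.bypass_isPath, path_length_eq hConn hAcyc _ q.bypass_isPath⟩

open SimpleGraph Walk in
lemma support_dist_le (hConn : T.Connected) (hAcyc : T.IsAcyclic) {w₀ v x : W}
    (p : T.Walk w₀ v) (hp : p.IsPath) (hx : x ∈ p.support) :
    T.dist w₀ x ≤ p.length ∧ (x ≠ v → T.dist w₀ x < p.length) := by
  classical
  have h1 : (p.takeUntil x hx).IsPath := hp.takeUntil hx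
  have h2 : (p.takeUntil x hx).length = T.dist w₀ x := path_length_eq hConn hAcyc _ h1
  have h3 := SimpleGraph.Walk.length_takeUntil_le p hx
  constructor
  · omega
  · intro hne
    have h4 := congrArg SimpleGraph.Walk.length (p.take_spec hx)
    rw [SimpleGraph.Walk.length_append] at h4
    have h5 : (p.dropUntil x hx).length ≠ 0 := fun h0 =>
      hne (SimpleGraph.Walk.eq_of_length_eq_zero h0)
    omega

open SimpleGraph Walk in
lemma isPath_concat {w₀ u v : W} {p : T.Walk w₀ u} (hp : p.IsPath) (h : T.Adj u v)
    (hv : v ∉ p.support) : (p.concat h).IsPath := by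
  rw [SimpleGraph.Walk.isPath_def, SimpleGraph.Walk.support_concat]
  rw [List.nodup_append']
  exact ⟨hp.support_nodup, List.nodup_singleton v,
    by intro a ha hb; simp at hb; subst hb; exact hv ha⟩

/-- Adjacent vertices in a tree are at distance differing by exactly one from the root. -/
lemma adj_level (hConn : T.Connected) (hAcyc : T.IsAcyclic) {w₀ u v : W}
    (huv : T.Adj u v) :
    T.dist w₀ v = T.dist w₀ u + 1 ∨ T.dist w₀ u = T.dist w₀ v + 1 := by
  obtain ⟨p, hp, hlen⟩ := exists_shortest_path hConn hAcyc w₀ u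
  by_cases hv : v ∈ p.support
  · right
    have h1 := (support_dist_le hConn hAcyc p hp hv).2 huv.ne'
    obtain ⟨pv, hpv, hlv⟩ := exists_shortest_path hConn hAcyc w₀ v
    have h2 := SimpleGraph.dist_le (pv.concat huv.symm)
    rw [SimpleGraph.Walk.length_concat, hlv] at h2
    omega
  · left
    have h3 := path_length_eq hConn hAcyc (p.concat huv) (isPath_concat hp huv hv)
    rw [SimpleGraph.Walk.length_concat] at h3
    omega

/-- Every vertex other than the root has a unique "parent" (neighbor closer to the root);
all its other neighbors are "children" (one step farther from the root). -/
lemma parent_spec (hConn : T.Connected) (hAcyc : T.IsAcyclic) {w₀ v : W} (hv : v ≠ w₀) :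
    ∃ p, T.Adj v p ∧ T.dist w₀ p + 1 = T.dist w₀ v ∧
      ∀ p', T.Adj v p' → p' ≠ p → T.dist w₀ p' = T.dist w₀ v + 1 := by
  obtain ⟨P, hP, hlen⟩ := exists_shortest_path hConn hAcyc w₀ v
  have hd : T.dist w₀ v ≠ 0 :=
    fun h0 => hv ((hConn.dist_eq_zero_iff).mp h0).symm
  -- decompose P from the end
  have hrev : P.reverse.IsPath := hP.reverse
  have hPlen : P.reverse.length ≠ 0 := by
    rw [SimpleGraph.Walk.length_reverse, hlen]; exact hd
  obtain ⟨x, h, q, hPrev⟩ : ∃ (x : W) (h : T.Adj v x) (q : T.Walk x w₀),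
      P.reverse = SimpleGraph.Walk.cons h q := by
    cases hPrev : P.reverse with
    | nil => rw [hPrev] at hPlen; simp at hPlen
    | cons h q => exact ⟨_, h, q, rfl⟩
  -- x is the parent
  have hq : q.IsPath ∧ v ∉ q.support := by
    have := hrev
    rw [hPrev, SimpleGraph.Walk.cons_isPath_iff] at this
    exact this
  have hqx : q.reverse.IsPath := hq.1.reverse
  have hlx : T.dist w₀ x = T.dist w₀ v - 1 ∧ 1 ≤ T.dist w₀ v := by
    have h5 := path_length_eq hConn hAcyc q.reverse hqx
    have h6 : P.reverse.length = q.length + 1 := by rw [hPrev]; simp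
    rw [SimpleGraph.Walk.length_reverse] at *
    omega
  refine ⟨x, h, by omega, ?_⟩
  intro p' hp' hne
  rcases adj_level hConn hAcyc (w₀ := w₀) hp' with h7 | h7
  · exact h7
  · -- p' is a second parent: contradiction with unique paths
    exfalso
    obtain ⟨P₁, hP₁, hl₁⟩ := exists_shortest_path hConn hAcyc w₀ x
    obtain ⟨P₂, hP₂, hl₂⟩ := exists_shortest_path hConn hAcyc w₀ p'
    have hv₁ : v ∉ P₁.support := fun hmem => by
      have := (support_dist_le hConn hAcyc P₁ hP₁ hmem).1
      omega
    have hv₂ : v ∉ P₂.support := fun hmem => by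
      have := (support_dist_le hConn hAcyc P₂ hP₂ hmem).1
      omega
    have hQ₁ : (P₁.concat h.symm).IsPath := isPath_concat hP₁ h.symm hv₁
    have hQ₂ : (P₂.concat hp'.symm).IsPath := isPath_concat hP₂ hp'.symm hv₂
    have heq : P₁.concat h.symm = P₂.concat hp'.symm :=
      congrArg Subtype.val
        ((SimpleGraph.isAcyclic_iff_path_unique.mp hAcyc) ⟨_, hQ₁⟩ ⟨_, hQ₂⟩)
    obtain ⟨hxp, -⟩ := SimpleGraph.Walk.concat_inj heq
    exact hne hxp.symm

end Tree

section Numeric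

/-- Case I: with one arbitrary neighbor and `Δ-1` B-neighbors, B is the strict best response. -/
lemma caseI_strict {q r D : ℝ} (hD : 2 ≤ D) (hq0 : 0 < q) (hq1 : q < 1) (hr : 0 < r)
    (h1 : 1 < 2 * q + D * r) (h2 : (D - 1) * q ≤ D * r) (h3 : 1 < D * q)
    (t s : Strat) (hs : s ≠ Strat.B) :
    pairPayoff q r s t + (D - 1) * pairPayoff q r s Strat.B
      < pairPayoff q r Strat.B t + (D - 1) * pairPayoff q r Strat.B Strat.B := by
  rcases le_total q (1 - q) with h | h <;>
    cases s <;> cases t <;>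
      simp only [pairPayoff, max_eq_right h, max_eq_left h, ne_eq, not_true_eq_false] at hs ⊢ <;>
        nlinarith [mul_pos (show (0:ℝ) < D by linarith) hr, h2, h1, h3]

/-- Case II: with one arbitrary neighbor and `Δ-1` B-neighbors, AB strictly beats A. -/
lemma caseII_AB_gt_A {q r D : ℝ} (hD : 2 ≤ D) (hq0 : 0 < q) (hq1 : q < 1) (hr : 0 < r)
    (h2 : D * r < (D - 1) * q) (t : Strat) :
    pairPayoff q r Strat.A t + (D - 1) * pairPayoff q r Strat.A Strat.B
      < pairPayoff q r Strat.AB t + (D - 1) * pairPayoff q r Strat.AB Strat.B := by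
  have hqr : r < q := by nlinarith
  rcases le_total q (1 - q) with h | h <;>
    cases t <;>
      simp only [pairPayoff, max_eq_right h, max_eq_left h] <;>
        nlinarith

/-- Case II: with one non-A neighbor and `Δ-1` B-neighbors, B is the strict best response. -/
lemma caseII_B_strict {q r D : ℝ} (hD : 2 ≤ D) (hq0 : 0 < q) (hq1 : q < 1) (hr : 0 < r)
    (h1 : 1 < 2 * q + D * r) (h2 : D * r < (D - 1) * q)
    (t s : Strat) (ht : t ≠ Strat.A) (hs : s ≠ Strat.B) :
    pairPayoff q r s t + (D - 1) * pairPayoff q r s Strat.B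
      < pairPayoff q r Strat.B t + (D - 1) * pairPayoff q r Strat.B Strat.B := by
  have h3 : 1 < (D + 1) * q := by nlinarith
  rcases le_total q (1 - q) with h | h <;>
    cases s <;> cases t <;>
      simp only [pairPayoff, max_eq_right h, max_eq_left h, ne_eq, not_true_eq_false]
        at hs ht ⊢ <;>
        nlinarith [mul_pos (show (0:ℝ) < D by linarith) hr]

end Numeric


section Balls

variable {W : Type*} {T : SimpleGraph W}

lemma level_zero_iff (hConn : T.Connected) {w₀ v : W} :
    T.dist w₀ v = 0 ↔ v = w₀ :=
  ⟨fun h => ((hConn.dist_eq_zero_iff).mp h).symm, fun h => by rw [h, SimpleGraph.dist_self]⟩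

lemma ball_finite {Δ : ℕ} (hΔ : 2 ≤ Δ) (hReg : IsRegular T Δ)
    (hConn : T.Connected) (hAcyc : T.IsAcyclic) (w₀ : W) :
    ∀ R : ℕ, {v : W | T.dist w₀ v ≤ R}.Finite := by
  intro R
  induction R with
  | zero =>
    refine Set.Finite.subset (Set.finite_singleton w₀) ?_
    intro v hv
    simp only [Set.mem_setOf_eq, Nat.le_zero] at hv
    simp [(level_zero_iff hConn).mp hv]
  | succ R ih =>
    refine Set.Finite.subset (ih.union (Set.Finite.biUnion ih
      (fun u _ => neighborSet_finite hΔ hReg u))) ?_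
    intro v hv
    simp only [Set.mem_setOf_eq] at hv
    by_cases h : T.dist w₀ v ≤ R
    · exact Or.inl h
    · have hv0 : v ≠ w₀ := by
        intro h0
        rw [h0, SimpleGraph.dist_self] at h
        omega
      obtain ⟨p, hadj, hlev, -⟩ := parent_spec hConn hAcyc hv0
      refine Or.inr (Set.mem_biUnion (show p ∈ {v : W | T.dist w₀ v ≤ R} by
        simp only [Set.mem_setOf_eq]; omega) ?_)
      exact hadj.symm

lemma exists_far {Δ : ℕ} (hΔ : 2 ≤ Δ) (hReg : IsRegular T Δ) (hInf : Infinite W)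
    (hConn : T.Connected) (hAcyc : T.IsAcyclic) (w₀ : W) (R : ℕ) :
    ∃ v : W, R < T.dist w₀ v := by
  by_contra h
  push_neg at h
  have : (Set.univ : Set W).Finite :=
    Set.Finite.subset (ball_finite hΔ hReg hConn hAcyc w₀ R) (fun v _ => h v)
  exact Set.infinite_univ this

end Balls

section NoEpidemic

variable {W : Type*} {T : SimpleGraph W}

theorem not_epidemic {Δ : ℕ} (hΔ : 2 ≤ Δ) (hInf : Infinite W)
    (hConn : T.Connected) (hAcyc : T.IsAcyclic) (hReg : IsRegular T Δ)
    {q r : ℝ} (hq0 : 0 < q) (hq1 : q < 1) (hr : 0 < r)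
    (h1 : 1 < 2 * q + Δ * r)
    (h2 : ((Δ : ℝ) - 1) * q ≤ Δ * r → 1 < Δ * q) :
    ¬ Epidemic T q r := by
  rintro ⟨S₀, α, σ, hS₀fin, hαsurj, hinitA, hinitB, hBR, hfix, hall⟩
  have w₀ : W := Classical.arbitrary W
  -- a bound on the levels of S₀
  obtain ⟨R, hR⟩ : ∃ R : ℕ, ∀ v ∈ S₀, T.dist w₀ v ≤ R := by
    obtain ⟨R, hR⟩ := (hS₀fin.image (T.dist w₀)).bddAbove
    exact ⟨R, fun v hv => hR (Set.mem_image_of_mem _ hv)⟩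
  have hD : (2 : ℝ) ≤ (Δ : ℝ) := by exact_mod_cast hΔ
  by_cases hcase : ((Δ : ℝ) - 1) * q ≤ Δ * r
  · -- Case I : all vertices beyond level R stay B
    have h3 : 1 < (Δ : ℝ) * q := h2 hcase
    have hInv : ∀ n v, R < T.dist w₀ v → σ n v = Strat.B := by
      intro n
      induction n with
      | zero =>
        intro v hv
        exact hinitB v (fun hmem => by have := hR v hmem; omega)
      | succ n ih =>
        intro v hv
        by_cases hva : v = α n
        · subst hva
          set v := α n
          have hv0 : v ≠ w₀ := fun h0 => by
            rw [h0, SimpleGraph.dist_self] at hv; omega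
          obtain ⟨p, hadj, hlev, hchild⟩ := parent_spec hConn hAcyc hv0
          have hsplit : ∀ s, totalPayoff T q r (σ n) v s
              = pairPayoff q r s (σ n p) + ((Δ : ℝ) - 1) * pairPayoff q r s Strat.B := by
            intro s
            refine totalPayoff_split hΔ hReg hadj (fun u hu hup => ih u ?_) s
            have := hchild u hu hup
            omega
          by_contra hne
          have hlt := caseI_strict hD hq0 hq1 hr h1 hcase h3 (σ n p) _ hne
          have hle := hBR n Strat.B
          rw [hsplit, hsplit] at hle
          linarith
        · rw [hfix n v hva]
          exact ih v hv
    obtain ⟨vfar, hvfar⟩ := exists_far hΔ hReg hInf hConn hAcyc w₀ R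
    obtain ⟨n, hn⟩ := hall vfar
    rw [hInv n vfar hvfar] at hn
    exact Strat.noConfusion hn
  · -- Case II
    push_neg at hcase
    have hInv : ∀ n v, (T.dist w₀ v = R + 1 → σ n v ≠ Strat.A) ∧
        (R + 2 ≤ T.dist w₀ v → σ n v = Strat.B) := by
      intro n
      induction n with
      | zero =>
        intro v
        constructor
        · intro hv
          have : v ∉ S₀ := fun hmem => by have := hR v hmem; omega
          rw [hinitB v this]
          exact fun h => Strat.noConfusion h
        · intro hv
          exact hinitB v (fun hmem => by have := hR v hmem; omega)
      | succ n ih =>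
        intro v
        by_cases hva : v = α n
        · subst hva
          set v := α n
          constructor
          · -- level R+1 : A is not a best response
            intro hv
            have hv0 : v ≠ w₀ := fun h0 => by
              rw [h0, SimpleGraph.dist_self] at hv; omega
            obtain ⟨p, hadj, hlev, hchild⟩ := parent_spec hConn hAcyc hv0
            have hsplit : ∀ s, totalPayoff T q r (σ n) v s
                = pairPayoff q r s (σ n p) + ((Δ : ℝ) - 1) * pairPayoff q r s Strat.B := by
              intro s
              refine totalPayoff_split hΔ hReg hadj (fun u hu hup => (ih u).2 ?_) s
              have := hchild u hu hup
              omega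
            intro hA
            have hlt := caseII_AB_gt_A hD hq0 hq1 hr hcase (σ n p)
            have hle := hBR n Strat.AB
            rw [hsplit, hsplit, hA] at hle
            linarith
          · -- level ≥ R+2 : B is the strict best response
            intro hv
            have hv0 : v ≠ w₀ := fun h0 => by
              rw [h0, SimpleGraph.dist_self] at hv; omega
            obtain ⟨p, hadj, hlev, hchild⟩ := parent_spec hConn hAcyc hv0
            have hsplit : ∀ s, totalPayoff T q r (σ n) v s
                = pairPayoff q r s (σ n p) + ((Δ : ℝ) - 1) * pairPayoff q r s Strat.B := by
              intro s
              refine totalPayoff_split hΔ hReg hadj (fun u hu hup => (ih u).2 ?_) s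
              have := hchild u hu hup
              omega
            have hpA : σ n p ≠ Strat.A := by
              rcases Nat.lt_or_ge (T.dist w₀ p) (R + 2) with h | h
              · exact (ih p).1 (by omega)
              · rw [(ih p).2 h]
                exact fun h => Strat.noConfusion h
            by_contra hne
            have hlt := caseII_B_strict hD hq0 hq1 hr h1 hcase (σ n p) _ hpA hne
            have hle := hBR n Strat.B
            rw [hsplit, hsplit] at hle
            linarith
        · rw [hfix n v hva]
          exact ih v
    obtain ⟨vfar, hvfar⟩ := exists_far hΔ hReg hInf hConn hAcyc w₀ (R + 1)
    obtain ⟨n, hn⟩ := hall vfar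
    rw [(hInv n vfar).2 (by omega)] at hn
    exact Strat.noConfusion hn

end NoEpidemic


section Enum

variable {W : Type*} [Infinite W] (T : SimpleGraph W) (w₀ : W)

lemma pick_spec (s : Finset W) :
    ∃ v : W, v ∉ s ∧ ∀ u : W, u ∉ s → T.dist w₀ v ≤ T.dist w₀ u := by
  have hcompl : ((↑s : Set W)ᶜ).Infinite := s.finite_toSet.infinite_compl
  have hne : {n : ℕ | ∃ v : W, v ∉ s ∧ T.dist w₀ v = n}.Nonempty := by
    obtain ⟨v, hv⟩ := hcompl.nonempty
    exact ⟨T.dist w₀ v, v, hv, rfl⟩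
  obtain ⟨v, hv, hvd⟩ := Nat.sInf_mem hne
  refine ⟨v, hv, fun u hu => ?_⟩
  rw [hvd]
  exact Nat.sInf_le ⟨u, hu, rfl⟩

/-- Pick an unpicked vertex of minimal level. -/
noncomputable def pick (s : Finset W) : W := (pick_spec T w₀ s).choose

lemma pick_not_mem (s : Finset W) : pick T w₀ s ∉ s := (pick_spec T w₀ s).choose_spec.1

lemma pick_min (s : Finset W) {u : W} (hu : u ∉ s) :
    T.dist w₀ (pick T w₀ s) ≤ T.dist w₀ u := (pick_spec T w₀ s).choose_spec.2 u hu

/-- The set of the first `n` enumerated vertices. -/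
noncomputable def enumAux : ℕ → Finset W
  | 0 => ∅
  | n + 1 => letI := Classical.decEq W; insert (pick T w₀ (enumAux n)) (enumAux n)

/-- A level-monotone enumeration of the vertices of the tree. -/
noncomputable def enum (n : ℕ) : W := pick T w₀ (enumAux T w₀ n)

lemma enumAux_succ (n : ℕ) :
    enumAux T w₀ (n + 1)
      = letI := Classical.decEq W; insert (enum T w₀ n) (enumAux T w₀ n) := rfl

lemma enumAux_mono {m n : ℕ} (h : m ≤ n) : enumAux T w₀ m ⊆ enumAux T w₀ n := by
  classical
  induction n with
  | zero => rw [Nat.le_zero.mp h]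
  | succ n ih =>
    rcases Nat.lt_or_ge m (n + 1) with h' | h'
    · exact (ih (by omega)).trans (by rw [enumAux_succ]; exact Finset.subset_insert _ _)
    · rw [show m = n + 1 by omega]

lemma mem_enumAux {x : W} {n : ℕ} : x ∈ enumAux T w₀ n ↔ ∃ m, m < n ∧ enum T w₀ m = x := by
  classical
  induction n with
  | zero => simp [enumAux]
  | succ n ih =>
    rw [enumAux_succ, Finset.mem_insert, ih]
    constructor
    · rintro (h | ⟨m, hm, h⟩)
      · exact ⟨n, by omega, h.symm⟩
      · exact ⟨m, by omega, h⟩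
    · rintro ⟨m, hm, h⟩
      rcases Nat.lt_or_ge m n with h' | h'
      · exact Or.inr ⟨m, h', h⟩
      · exact Or.inl (by rw [← h, show m = n by omega])

lemma enum_injective : Function.Injective (enum T w₀) := by
  intro m n h
  by_contra hne
  wlog hlt : m < n generalizing m n
  · exact this h.symm (Ne.symm hne) (by omega)
  have h1 : enum T w₀ m ∈ enumAux T w₀ n :=
    (mem_enumAux T w₀).mpr ⟨m, hlt, rfl⟩
  rw [h] at h1
  exact pick_not_mem T w₀ _ h1

lemma enum_level_mono {m n : ℕ} (h : m ≤ n) :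
    T.dist w₀ (enum T w₀ m) ≤ T.dist w₀ (enum T w₀ n) := by
  rcases Nat.eq_or_lt_of_le h with rfl | hlt
  · exact le_refl _
  refine pick_min T w₀ _ ?_
  intro hmem
  obtain ⟨k, hk, hke⟩ := (mem_enumAux T w₀).mp hmem
  exact (by omega : ¬ k = n) (enum_injective T w₀ hke)

lemma enum_lt_of_level_lt {m n : ℕ}
    (h : T.dist w₀ (enum T w₀ m) < T.dist w₀ (enum T w₀ n)) : m < n := by
  by_contra h'
  exact absurd (enum_level_mono T w₀ (by omega : n ≤ m)) (by omega)

lemma enum_surjective {Δ : ℕ} (hΔ : 2 ≤ Δ) (hReg : IsRegular T Δ)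
    (hConn : T.Connected) (hAcyc : T.IsAcyclic) :
    Function.Surjective (enum T w₀) := by
  intro v
  by_contra hv
  push_neg at hv
  have hnot : ∀ n, v ∉ enumAux T w₀ n := by
    intro n hmem
    obtain ⟨m, _, hme⟩ := (mem_enumAux T w₀).mp hmem
    exact hv m hme
  have hball : ∀ n, enum T w₀ n ∈ {u : W | T.dist w₀ u ≤ T.dist w₀ v} :=
    fun n => pick_min T w₀ _ (hnot n)
  exact (Set.infinite_of_injective_forall_mem (enum_injective T w₀) hball)
    (ball_finite hΔ hReg hConn hAcyc w₀ (T.dist w₀ v))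

/-- The position of a vertex in the enumeration. -/
noncomputable def vidx (x : W) : ℕ := Function.invFun (enum T w₀) x

lemma enum_vidx {Δ : ℕ} (hΔ : 2 ≤ Δ) (hReg : IsRegular T Δ)
    (hConn : T.Connected) (hAcyc : T.IsAcyclic) (x : W) :
    enum T w₀ (vidx T w₀ x) = x :=
  Function.invFun_eq (enum_surjective T w₀ hΔ hReg hConn hAcyc x)

lemma vidx_enum (n : ℕ) : vidx T w₀ (enum T w₀ n) = n :=
  Function.leftInverse_invFun (enum_injective T w₀) n

lemma enum_zero (hConn : T.Connected) : enum T w₀ 0 = w₀ := by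
  have h := pick_min T w₀ (enumAux T w₀ 0) (show w₀ ∉ (∅ : Finset W) by simp)
  rw [SimpleGraph.dist_self, Nat.le_zero] at h
  exact (level_zero_iff hConn).mp h

lemma vidx_lt_of_level_lt {Δ : ℕ} (hΔ : 2 ≤ Δ) (hReg : IsRegular T Δ)
    (hConn : T.Connected) (hAcyc : T.IsAcyclic) {x y : W}
    (h : T.dist w₀ x < T.dist w₀ y) : vidx T w₀ x < vidx T w₀ y := by
  refine enum_lt_of_level_lt T w₀ ?_
  rwa [enum_vidx T w₀ hΔ hReg hConn hAcyc, enum_vidx T w₀ hΔ hReg hConn hAcyc]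

end Enum


section Region1

lemma region1_A_best {q r D : ℝ} (hD : 2 ≤ D) (hq0 : 0 < q) (hq1 : q < 1) (hr : 0 < r)
    (hq : D * q ≤ 1) (hr1 : (D - 1) * q ≤ D * r) (s : Strat) :
    pairPayoff q r s Strat.A + (D - 1) * pairPayoff q r s Strat.B
      ≤ pairPayoff q r Strat.A Strat.A + (D - 1) * pairPayoff q r Strat.A Strat.B := by
  cases s <;> simp only [pairPayoff] <;> nlinarith

lemma allA_A_best {q r D : ℝ} (hD : 2 ≤ D) (hq0 : 0 < q) (hq1 : q < 1) (hr : 0 < r)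
    (s : Strat) : D * pairPayoff q r s Strat.A ≤ D * pairPayoff q r Strat.A Strat.A := by
  have h : (0:ℝ) ≤ D := by linarith
  cases s <;> simp only [pairPayoff] <;> nlinarith

variable {W : Type*} {T : SimpleGraph W}

theorem epidemic_region1 {Δ : ℕ} (hΔ : 2 ≤ Δ) (hInf : Infinite W)
    (hConn : T.Connected) (hAcyc : T.IsAcyclic) (hReg : IsRegular T Δ)
    {q r : ℝ} (hq0 : 0 < q) (hq1 : q < 1) (hr : 0 < r)
    (hq : (Δ : ℝ) * q ≤ 1) (hr1 : ((Δ : ℝ) - 1) * q ≤ (Δ : ℝ) * r) :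
    Epidemic T q r := by
  classical
  have w₀ : W := Classical.arbitrary W
  have hD : (2 : ℝ) ≤ (Δ : ℝ) := by exact_mod_cast hΔ
  refine ⟨{v | T.dist w₀ v ≤ 1}, enum T w₀,
    fun n v => if T.dist w₀ v ≤ 1 ∨ vidx T w₀ v < n then Strat.A else Strat.B,
    ball_finite hΔ hReg hConn hAcyc w₀ 1,
    enum_surjective T w₀ hΔ hReg hConn hAcyc, ?_, ?_, ?_, ?_, ?_⟩
  · intro v hv
    simp only [Set.mem_setOf_eq] at hv
    simp [hv]
  · intro v hv
    simp only [Set.mem_setOf_eq] at hv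
    simp [hv]
  · -- best response condition
    intro n
    have hupd : (if T.dist w₀ (enum T w₀ n) ≤ 1 ∨ vidx T w₀ (enum T w₀ n) < n + 1
        then Strat.A else Strat.B) = Strat.A := by
      rw [if_pos (Or.inr (by rw [vidx_enum]; omega))]
    beta_reduce
    rw [hupd]
    intro s'
    by_cases hroot : enum T w₀ n = w₀
    · -- the root: all its neighbors are in S₀, hence play A
      have hA : ∀ u, T.Adj (enum T w₀ n) u →
          (if T.dist w₀ u ≤ 1 ∨ vidx T w₀ u < n then Strat.A else Strat.B) = Strat.A := by
        intro u hu
        rw [hroot] at hu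
        rcases adj_level hConn hAcyc (w₀ := w₀) hu with h | h <;>
          rw [SimpleGraph.dist_self] at h
        · exact if_pos (Or.inl (by omega))
        · omega
      rw [totalPayoff_const hΔ hReg hA s', totalPayoff_const hΔ hReg hA Strat.A]
      exact allA_A_best hD hq0 hq1 hr s'
    · -- a non-root vertex: parent plays A, children play B
      obtain ⟨p, hadj, hlev, hchild⟩ := parent_spec hConn hAcyc hroot
      have hd1 : 1 ≤ T.dist w₀ (enum T w₀ n) := by
        rcases Nat.eq_zero_or_pos (T.dist w₀ (enum T w₀ n)) with h | h
        · exact absurd ((level_zero_iff hConn).mp h) hroot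
        · omega
      have hσp : (if T.dist w₀ p ≤ 1 ∨ vidx T w₀ p < n then Strat.A else Strat.B)
          = Strat.A := by
        refine if_pos ?_
        by_cases hp1 : T.dist w₀ p ≤ 1
        · exact Or.inl hp1
        · refine Or.inr ?_
          have := vidx_lt_of_level_lt T w₀ hΔ hReg hConn hAcyc
            (show T.dist w₀ p < T.dist w₀ (enum T w₀ n) by omega)
          rwa [vidx_enum] at this
      have hchildren : ∀ u, T.Adj (enum T w₀ n) u → u ≠ p →
          (if T.dist w₀ u ≤ 1 ∨ vidx T w₀ u < n then Strat.A else Strat.B) = Strat.B := by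
        intro u hu hup
        have hlu := hchild u hu hup
        refine if_neg ?_
        push_neg
        constructor
        · omega
        · have := vidx_lt_of_level_lt T w₀ hΔ hReg hConn hAcyc
            (show T.dist w₀ (enum T w₀ n) < T.dist w₀ u by omega)
          rw [vidx_enum] at this
          omega
      rw [totalPayoff_split hΔ hReg hadj hchildren s',
        totalPayoff_split hΔ hReg hadj hchildren Strat.A, hσp]
      exact region1_A_best hD hq0 hq1 hr hq hr1 s'
  · -- unchanged vertices
    intro n v hv
    beta_reduce
    have : vidx T w₀ v ≠ n := by
      intro h
      exact hv (by rw [← h, enum_vidx T w₀ hΔ hReg hConn hAcyc])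
    by_cases h1 : T.dist w₀ v ≤ 1 ∨ vidx T w₀ v < n
    · rw [if_pos h1, if_pos (by rcases h1 with h | h; exacts [Or.inl h, Or.inr (by omega)])]
    · rw [if_neg h1, if_neg (by push_neg at h1 ⊢; exact ⟨h1.1, by omega⟩)]
  · -- everyone eventually plays A
    intro v
    exact ⟨vidx T w₀ v + 1, if_pos (Or.inr (by omega))⟩

end Region1


section Region2

/-- AB is a best response when one neighbor plays `t ≠ B` and the others play B. -/
lemma region2_AB_best {q r D : ℝ} (hD : 2 ≤ D) (hq0 : 0 < q) (hq1 : q < 1) (hr : 0 < r)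
    (h1 : 2 * q + D * r ≤ 1) (h2 : D * r ≤ (D - 1) * q) {t : Strat} (ht : t ≠ Strat.B)
    (s : Strat) :
    pairPayoff q r s t + (D - 1) * pairPayoff q r s Strat.B
      ≤ pairPayoff q r Strat.AB t + (D - 1) * pairPayoff q r Strat.AB Strat.B := by
  have hmax : max q (1 - q) = 1 - q := max_eq_right (by nlinarith)
  cases s <;> cases t <;>
    simp only [pairPayoff, hmax, ne_eq, not_true_eq_false] at ht ⊢ <;> nlinarith

/-- A is a best response when one neighbor plays A and the others play AB. -/
lemma region2_A_best {q r D : ℝ} (hD : 2 ≤ D) (hq0 : 0 < q) (hq1 : q < 1) (hr : 0 < r)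
    (h1 : 2 * q + D * r ≤ 1) (s : Strat) :
    pairPayoff q r s Strat.A + (D - 1) * pairPayoff q r s Strat.AB
      ≤ pairPayoff q r Strat.A Strat.A + (D - 1) * pairPayoff q r Strat.A Strat.AB := by
  have hq2 : 2 * q < 1 := by nlinarith [mul_pos (show (0:ℝ) < D by linarith) hr]
  have hmax : max q (1 - q) = 1 - q := max_eq_right (by nlinarith)
  cases s <;> simp only [pairPayoff, hmax] <;>
    nlinarith [hq2, mul_nonneg (show (0:ℝ) ≤ 2 * D - 1 by linarith)
      (show (0:ℝ) ≤ 1 - 2 * q by linarith)]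

/-- A is a best response when all neighbors play AB. -/
lemma region2_A_best_root {q r D : ℝ} (hD : 2 ≤ D) (hq0 : 0 < q) (hq1 : q < 1) (hr : 0 < r)
    (h1 : 2 * q + D * r ≤ 1) (s : Strat) :
    D * pairPayoff q r s Strat.AB ≤ D * pairPayoff q r Strat.A Strat.AB := by
  have hq2 : 2 * q < 1 := by nlinarith [mul_pos (show (0:ℝ) < D by linarith) hr]
  have hmax : max q (1 - q) = 1 - q := max_eq_right (by nlinarith)
  cases s <;> simp only [pairPayoff, hmax] <;>
    nlinarith [hq2, mul_nonneg (show (0:ℝ) ≤ D by linarith)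
      (show (0:ℝ) ≤ 1 - 2 * q by linarith)]

variable {W : Type*} [Infinite W] (T : SimpleGraph W) (w₀ : W)

/-- The largest enumeration index of a child of `v`. -/
noncomputable def cmax (v : W) : ℕ :=
  sSup (vidx T w₀ '' {u | T.Adj v u ∧ T.dist w₀ u = T.dist w₀ v + 1})

section CmaxLemmas

variable {Δ : ℕ} (hΔ : 2 ≤ Δ) (hReg : IsRegular T Δ)
    (hConn : T.Connected) (hAcyc : T.IsAcyclic)

include hΔ hReg hConn hAcyc

lemma child_exists (v : W) : ∃ u, T.Adj v u ∧ T.dist w₀ u = T.dist w₀ v + 1 := by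
  by_cases hroot : v = w₀
  · subst hroot
    have hne : (T.neighborSet v).Nonempty := by
      rw [← Set.ncard_pos ((neighborSet_finite hΔ hReg v))]
      rw [hReg v]; omega
    obtain ⟨u, hu⟩ := hne
    rcases adj_level hConn hAcyc (w₀ := v) hu with h | h
    · exact ⟨u, hu, by rwa [SimpleGraph.dist_self] at h ⊢⟩
    · rw [SimpleGraph.dist_self] at h; omega
  · obtain ⟨p, hadj, hlev, hchild⟩ := parent_spec hConn hAcyc hroot
    have : ∃ u, T.Adj v u ∧ u ≠ p := by
      by_contra hcon
      push_neg at hcon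
      have hsub : T.neighborSet v ⊆ {p} := fun u hu => hcon u hu
      have := Set.ncard_le_ncard hsub (Set.finite_singleton p)
      rw [hReg v, Set.ncard_singleton] at this
      omega
    obtain ⟨u, hu, hup⟩ := this
    exact ⟨u, hu, hchild u hu hup⟩

lemma cmax_bddAbove (v : W) :
    BddAbove (vidx T w₀ '' {u | T.Adj v u ∧ T.dist w₀ u = T.dist w₀ v + 1}) := by
  refine Set.Finite.bddAbove (Set.Finite.image _ (Set.Finite.subset
    (neighborSet_finite hΔ hReg v) ?_))
  exact fun u hu => hu.1

lemma cmax_mem (v : W) :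
    ∃ u, T.Adj v u ∧ T.dist w₀ u = T.dist w₀ v + 1 ∧ vidx T w₀ u = cmax T w₀ v := by
  obtain ⟨u₀, h₀⟩ := child_exists T w₀ hΔ hReg hConn hAcyc v
  have hmem := Nat.sSup_mem (s := vidx T w₀ '' {u | T.Adj v u ∧ T.dist w₀ u = T.dist w₀ v + 1})
    ⟨vidx T w₀ u₀, Set.mem_image_of_mem _ h₀⟩ (cmax_bddAbove T w₀ hΔ hReg hConn hAcyc v)
  obtain ⟨u, hu, huv⟩ := hmem
  exact ⟨u, hu.1, hu.2, huv⟩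

lemma le_cmax {v u : W} (hadj : T.Adj v u) (hlev : T.dist w₀ u = T.dist w₀ v + 1) :
    vidx T w₀ u ≤ cmax T w₀ v :=
  le_csSup (cmax_bddAbove T w₀ hΔ hReg hConn hAcyc v)
    (Set.mem_image_of_mem _ ⟨hadj, hlev⟩)

lemma vidx_eq_iff {u v : W} : vidx T w₀ u = vidx T w₀ v ↔ u = v := by
  constructor
  · intro h
    have h1 := enum_vidx T w₀ hΔ hReg hConn hAcyc u
    rw [h, enum_vidx T w₀ hΔ hReg hConn hAcyc v] at h1
    exact h1.symm
  · intro h; rw [h]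

lemma vidx_zero_iff {v : W} : vidx T w₀ v = 0 ↔ v = w₀ := by
  have h0 : vidx T w₀ w₀ = 0 := by
    have := vidx_enum T w₀ 0
    rwa [enum_zero T w₀ hConn] at this
  constructor
  · intro h
    rw [← h0] at h
    exact (vidx_eq_iff T w₀ hΔ hReg hConn hAcyc).mp h
  · intro h; rw [h, h0]

lemma vidx_lt_cmax (v : W) : vidx T w₀ v < cmax T w₀ v := by
  obtain ⟨u, hadj, hlev, hidx⟩ := cmax_mem T w₀ hΔ hReg hConn hAcyc v
  rw [← hidx]
  exact vidx_lt_of_level_lt T w₀ hΔ hReg hConn hAcyc (by omega)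

lemma cmax_inj {v₁ v₂ : W} (h : cmax T w₀ v₁ = cmax T w₀ v₂) : v₁ = v₂ := by
  obtain ⟨u₁, hadj₁, hlev₁, hidx₁⟩ := cmax_mem T w₀ hΔ hReg hConn hAcyc v₁
  obtain ⟨u₂, hadj₂, hlev₂, hidx₂⟩ := cmax_mem T w₀ hΔ hReg hConn hAcyc v₂
  have hu : u₁ = u₂ := by
    refine (vidx_eq_iff T w₀ hΔ hReg hConn hAcyc).mp ?_
    rw [hidx₁, hidx₂, h]
  subst hu
  have hu0 : u₁ ≠ w₀ := by
    intro h0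
    rw [h0] at hlev₁
    rw [SimpleGraph.dist_self] at hlev₁
    omega
  obtain ⟨p, hadjp, hlevp, hchildp⟩ := parent_spec hConn hAcyc hu0
  have h₁ : v₁ = p := by
    by_contra hne
    have := hchildp v₁ hadj₁.symm hne
    omega
  have h₂ : v₂ = p := by
    by_contra hne
    have := hchildp v₂ hadj₂.symm hne
    omega
  rw [h₁, h₂]

lemma cmax_parent {v p : W} (hadj : T.Adj v p) (hlev : T.dist w₀ p + 1 = T.dist w₀ v) :
    cmax T w₀ p < cmax T w₀ v := by
  obtain ⟨u, hadj₁, hlev₁, hidx₁⟩ := cmax_mem T w₀ hΔ hReg hConn hAcyc p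
  obtain ⟨m, hadj₂, hlev₂, hidx₂⟩ := cmax_mem T w₀ hΔ hReg hConn hAcyc v
  rw [← hidx₁, ← hidx₂]
  exact vidx_lt_of_level_lt T w₀ hΔ hReg hConn hAcyc (by omega)

end CmaxLemmas

open scoped Classical in
/-- The update schedule for the region-2 epidemic. -/
noncomputable def r2sched : ℕ → W := fun n =>
  if n % 2 = 0 then enum T w₀ (n / 2 + 1)
  else if h : ∃ w : W, cmax T w₀ w = n / 2 + 1 then h.choose else enum T w₀ (n / 2 + 1)

open scoped Classical in
/-- The strategy profile along the region-2 epidemic. -/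
noncomputable def r2prof : ℕ → W → Strat := fun n v =>
  if v = w₀ ∨ 2 * cmax T w₀ v - 1 < n then Strat.A
  else if 2 * vidx T w₀ v - 2 < n then Strat.AB
  else Strat.B

end Region2


section Region2Main

variable {W : Type*} [Infinite W] (T : SimpleGraph W) (w₀ : W)

lemma r2prof_root (n : ℕ) : r2prof T w₀ n w₀ = Strat.A := if_pos (Or.inl rfl)

lemma r2prof_A {n : ℕ} {v : W} (h : 2 * cmax T w₀ v - 1 < n) :
    r2prof T w₀ n v = Strat.A := if_pos (Or.inr h)

lemma r2prof_AB {n : ℕ} {v : W} (hv : v ≠ w₀) (h1 : 2 * vidx T w₀ v - 2 < n)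
    (h2 : n ≤ 2 * cmax T w₀ v - 1) : r2prof T w₀ n v = Strat.AB := by
  rw [r2prof, if_neg (by push_neg; exact ⟨hv, by omega⟩), if_pos h1]

lemma r2prof_B {n : ℕ} {v : W} (hv : v ≠ w₀) (hvc : vidx T w₀ v < cmax T w₀ v)
    (h : n ≤ 2 * vidx T w₀ v - 2) (hv1 : 1 ≤ vidx T w₀ v) : r2prof T w₀ n v = Strat.B := by
  rw [r2prof, if_neg (by push_neg; exact ⟨hv, by omega⟩), if_neg (by omega)]

variable {Δ : ℕ} (hΔ : 2 ≤ Δ) (hReg : IsRegular T Δ)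
    (hConn : T.Connected) (hAcyc : T.IsAcyclic)
    {q r : ℝ} (hq0 : 0 < q) (hq1 : q < 1) (hr : 0 < r)
    (h2qr : 2 * q + Δ * r ≤ 1) (hrq : (Δ : ℝ) * r ≤ ((Δ : ℝ) - 1) * q)

include hΔ hReg hConn hAcyc hq0 hq1 hr h2qr hrq

/-- At times `2k` and `2k+1`, `AB` is a best response for the vertex `enum (k+1)`. -/
lemma r2_step_AB (k n : ℕ) (hn : n = 2 * k ∨ n = 2 * k + 1) (s' : Strat) :
    totalPayoff T q r (r2prof T w₀ n) (enum T w₀ (k + 1)) s'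
      ≤ totalPayoff T q r (r2prof T w₀ n) (enum T w₀ (k + 1)) Strat.AB := by
  have hD : (2 : ℝ) ≤ (Δ : ℝ) := by exact_mod_cast hΔ
  set v := enum T w₀ (k + 1) with hv
  have hιv : vidx T w₀ v = k + 1 := vidx_enum T w₀ (k + 1)
  have hv0 : v ≠ w₀ := by
    intro h
    rw [h, vidx_zero_iff T w₀ hΔ hReg hConn hAcyc |>.mpr rfl] at hιv
    · omega
  obtain ⟨p, hadj, hlev, hchild⟩ := parent_spec hConn hAcyc hv0
  -- the parent plays A or AB
  have hpstate : r2prof T w₀ n p ≠ Strat.B := by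
    by_cases hproot : p = w₀
    · rw [hproot, r2prof_root]
      exact fun h => Strat.noConfusion h
    · have hιp : vidx T w₀ p < k + 1 := by
        have := vidx_lt_of_level_lt T w₀ hΔ hReg hConn hAcyc
          (show T.dist w₀ p < T.dist w₀ v by omega)
        omega
      have hcp : k + 1 ≤ cmax T w₀ p := by
        have h := le_cmax T w₀ hΔ hReg hConn hAcyc hadj.symm (by omega)
        omega
      have hιp0 : vidx T w₀ p ≠ 0 :=
        fun h => hproot ((vidx_zero_iff T w₀ hΔ hReg hConn hAcyc).mp h)
      have hABp : r2prof T w₀ n p = Strat.AB := by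
        refine r2prof_AB T w₀ hproot ?_ ?_
        · omega
        · omega
      rw [hABp]
      exact fun h => Strat.noConfusion h
  -- the children play B
  have hchildstate : ∀ u, T.Adj v u → u ≠ p → r2prof T w₀ n u = Strat.B := by
    intro u hu hup
    have hlu := hchild u hu hup
    have hu0 : u ≠ w₀ := by
      intro h
      rw [h, SimpleGraph.dist_self] at hlu
      omega
    have hιu : k + 1 < vidx T w₀ u := by
      have := vidx_lt_of_level_lt T w₀ hΔ hReg hConn hAcyc
        (show T.dist w₀ v < T.dist w₀ u by omega)
      omega
    exact r2prof_B T w₀ hu0 (vidx_lt_cmax T w₀ hΔ hReg hConn hAcyc u) (by omega) (by omega)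
  rw [totalPayoff_split hΔ hReg hadj hchildstate s',
    totalPayoff_split hΔ hReg hadj hchildstate Strat.AB]
  exact region2_AB_best hD hq0 hq1 hr h2qr hrq hpstate s'

/-- At time `2k+1`, `A` is a best response for the vertex whose children have
maximal index `k+1`. -/
lemma r2_step_A (k : ℕ) {w : W} (hw : cmax T w₀ w = k + 1) (s' : Strat) :
    totalPayoff T q r (r2prof T w₀ (2 * k + 1)) w s'
      ≤ totalPayoff T q r (r2prof T w₀ (2 * k + 1)) w Strat.A := by
  have hD : (2 : ℝ) ≤ (Δ : ℝ) := by exact_mod_cast hΔ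
  -- all children of w play AB at time 2k+1
  have hchildstate : ∀ u, T.Adj w u → T.dist w₀ u = T.dist w₀ w + 1 →
      r2prof T w₀ (2 * k + 1) u = Strat.AB := by
    intro u hu hlu
    have hu0 : u ≠ w₀ := by
      intro h
      rw [h, SimpleGraph.dist_self] at hlu
      omega
    have hιu : vidx T w₀ u ≤ k + 1 := hw ▸ le_cmax T w₀ hΔ hReg hConn hAcyc hu hlu
    -- cmax u ≥ k+2 : every child of u has index larger than the maximal child of w
    obtain ⟨u₀, hadj₀, hlev₀, hidx₀⟩ := cmax_mem T w₀ hΔ hReg hConn hAcyc w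
    obtain ⟨m, hadjm, hlevm, hidxm⟩ := cmax_mem T w₀ hΔ hReg hConn hAcyc u
    have hcmu : k + 2 ≤ cmax T w₀ u := by
      have := vidx_lt_of_level_lt T w₀ hΔ hReg hConn hAcyc
        (show T.dist w₀ u₀ < T.dist w₀ m by omega)
      omega
    exact r2prof_AB T w₀ hu0 (by omega) (by omega)
  by_cases hroot : w = w₀
  · have hall : ∀ u, T.Adj w u → r2prof T w₀ (2 * k + 1) u = Strat.AB := by
      intro u hu
      refine hchildstate u hu ?_
      have hu' : T.Adj w₀ u := hroot ▸ hu
      rcases adj_level hConn hAcyc (w₀ := w₀) hu' with h | h <;>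
        rw [SimpleGraph.dist_self] at h
      · rw [hroot, SimpleGraph.dist_self]; omega
      · omega
    rw [totalPayoff_const hΔ hReg hall s', totalPayoff_const hΔ hReg hall Strat.A]
    exact region2_A_best_root hD hq0 hq1 hr h2qr s'
  · obtain ⟨p, hadj, hlev, hchild⟩ := parent_spec hConn hAcyc hroot
    have hpstate : r2prof T w₀ (2 * k + 1) p = Strat.A := by
      by_cases hproot : p = w₀
      · rw [hproot, r2prof_root]
      · have := cmax_parent T w₀ hΔ hReg hConn hAcyc hadj hlev
        rw [hw] at this
        exact r2prof_A T w₀ (by omega)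
    have hchildstate' : ∀ u, T.Adj w u → u ≠ p → r2prof T w₀ (2 * k + 1) u = Strat.AB :=
      fun u hu hup => hchildstate u hu (hchild u hu hup)
    rw [totalPayoff_split hΔ hReg hadj hchildstate' s',
      totalPayoff_split hΔ hReg hadj hchildstate' Strat.A, hpstate]
    exact region2_A_best hD hq0 hq1 hr h2qr s'

end Region2Main


section Region2Epidemic

variable {W : Type*} {T : SimpleGraph W}

theorem epidemic_region2 {Δ : ℕ} (hΔ : 2 ≤ Δ) (hInf : Infinite W)
    (hConn : T.Connected) (hAcyc : T.IsAcyclic) (hReg : IsRegular T Δ)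
    {q r : ℝ} (hq0 : 0 < q) (hq1 : q < 1) (hr : 0 < r)
    (h2qr : 2 * q + Δ * r ≤ 1) (hrq : (Δ : ℝ) * r ≤ ((Δ : ℝ) - 1) * q) :
    Epidemic T q r := by
  classical
  have w₀ : W := Classical.arbitrary W
  have hι1 : ∀ v : W, v ≠ w₀ → 1 ≤ vidx T w₀ v := by
    intro v hv
    rcases Nat.eq_zero_or_pos (vidx T w₀ v) with h | h
    · exact absurd ((vidx_zero_iff T w₀ hΔ hReg hConn hAcyc).mp h) hv
    · omega
  have hc1 : ∀ v : W, vidx T w₀ v < cmax T w₀ v :=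
    vidx_lt_cmax T w₀ hΔ hReg hConn hAcyc
  refine ⟨{w₀}, r2sched T w₀, r2prof T w₀, Set.finite_singleton w₀, ?_, ?_, ?_, ?_, ?_, ?_⟩
  · -- surjectivity of the schedule
    intro v
    by_cases hv : v = w₀
    · refine ⟨2 * cmax T w₀ w₀ - 1, ?_⟩
      have hc := hc1 w₀
      rw [r2sched, if_neg (by omega)]
      have hex : ∃ w : W, cmax T w₀ w = (2 * cmax T w₀ w₀ - 1) / 2 + 1 := ⟨w₀, by omega⟩
      rw [dif_pos hex, hv]
      exact cmax_inj T w₀ hΔ hReg hConn hAcyc (by rw [hex.choose_spec]; omega)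
    · refine ⟨2 * (vidx T w₀ v - 1), ?_⟩
      have h1 := hι1 v hv
      rw [r2sched, if_pos (by omega)]
      rw [show 2 * (vidx T w₀ v - 1) / 2 + 1 = vidx T w₀ v by omega]
      exact enum_vidx T w₀ hΔ hReg hConn hAcyc v
  · -- initial profile on S₀
    intro v hv
    rw [Set.mem_singleton_iff] at hv
    rw [hv]
    exact r2prof_root T w₀ 0
  · -- initial profile outside S₀
    intro v hv
    rw [Set.mem_singleton_iff] at hv
    exact r2prof_B T w₀ hv (hc1 v) (by omega) (hι1 v hv)
  · -- best responses
    intro n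
    rcases Nat.even_or_odd n with ⟨k, hk⟩ | ⟨k, hk⟩
    · -- even step : enum (k+1) adopts AB
      have hα : r2sched T w₀ n = enum T w₀ (k + 1) := by
        rw [r2sched, if_pos (by omega)]
        congr 1
        omega
      rw [hα]
      have hι : vidx T w₀ (enum T w₀ (k + 1)) = k + 1 := vidx_enum T w₀ (k + 1)
      have hcm := hc1 (enum T w₀ (k + 1))
      have hne : enum T w₀ (k + 1) ≠ w₀ := by
        intro h
        rw [h, (vidx_zero_iff T w₀ hΔ hReg hConn hAcyc).mpr rfl] at hι
        omega
      have hupd : r2prof T w₀ (n + 1) (enum T w₀ (k + 1)) = Strat.AB :=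
        r2prof_AB T w₀ hne (by omega) (by omega)
      rw [hupd]
      intro s'
      exact r2_step_AB T w₀ hΔ hReg hConn hAcyc hq0 hq1 hr h2qr hrq k n
        (Or.inl (by omega)) s'
    · -- odd step
      by_cases hex : ∃ w : W, cmax T w₀ w = k + 1
      · have hα : r2sched T w₀ n = hex.choose := by
          rw [r2sched, if_neg (by omega)]
          rw [show n / 2 = k from by omega, dif_pos hex]
        rw [hα]
        have hcw : cmax T w₀ hex.choose = k + 1 := hex.choose_spec
        have hupd : r2prof T w₀ (n + 1) hex.choose = Strat.A :=
          r2prof_A T w₀ (by omega)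
        rw [hupd]
        intro s'
        have h := r2_step_A T w₀ hΔ hReg hConn hAcyc hq0 hq1 hr h2qr hrq k hcw s'
        rwa [show 2 * k + 1 = n from by omega] at h
      · have hα : r2sched T w₀ n = enum T w₀ (k + 1) := by
          rw [r2sched, if_neg (by omega)]
          rw [show n / 2 = k from by omega, dif_neg hex]
        rw [hα]
        have hι : vidx T w₀ (enum T w₀ (k + 1)) = k + 1 := vidx_enum T w₀ (k + 1)
        have hcm := hc1 (enum T w₀ (k + 1))
        have hne : enum T w₀ (k + 1) ≠ w₀ := by
          intro h
          rw [h, (vidx_zero_iff T w₀ hΔ hReg hConn hAcyc).mpr rfl] at hι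
          omega
        have hupd : r2prof T w₀ (n + 1) (enum T w₀ (k + 1)) = Strat.AB :=
          r2prof_AB T w₀ hne (by omega) (by omega)
        rw [hupd]
        intro s'
        exact r2_step_AB T w₀ hΔ hReg hConn hAcyc hq0 hq1 hr h2qr hrq k n
          (Or.inr (by omega)) s'
  · -- vertices other than the updated one keep their strategies
    intro n v hv
    by_cases hroot : v = w₀
    · rw [hroot, r2prof_root, r2prof_root]
    · have hv1 := hι1 v hroot
      have hcv := hc1 v
      have hn1 : n ≠ 2 * vidx T w₀ v - 2 := by
        intro h
        apply hv
        rw [r2sched, if_pos (by omega)]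
        rw [show n / 2 + 1 = vidx T w₀ v from by omega]
        exact (enum_vidx T w₀ hΔ hReg hConn hAcyc v).symm
      have hn2 : n ≠ 2 * cmax T w₀ v - 1 := by
        intro h
        apply hv
        rw [r2sched, if_neg (by omega)]
        have hex : ∃ w : W, cmax T w₀ w = n / 2 + 1 := ⟨v, by omega⟩
        rw [dif_pos hex]
        exact (cmax_inj T w₀ hΔ hReg hConn hAcyc (by rw [hex.choose_spec]; omega)).symm
      have e1 : (2 * cmax T w₀ v - 1 < n + 1) ↔ (2 * cmax T w₀ v - 1 < n) := by omega
      have e2 : (2 * vidx T w₀ v - 2 < n + 1) ↔ (2 * vidx T w₀ v - 2 < n) := by omega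
      simp only [r2prof, e1, e2]
  · -- everyone eventually plays A
    intro v
    exact ⟨2 * cmax T w₀ v, r2prof_A T w₀ (by have := hc1 v; omega)⟩

end Region2Epidemic


/-- The epidemic region of the infinite `Δ`-regular tree is exactly
`{(q,r) : q,r > 0, r ≥ ((Δ-1)/Δ)q, q ≤ 1/Δ} ∪ {(q,r) : q,r > 0, 2q + Δr ≤ 1}`. -/
theorem tree_epidemic_region_eq {W : Type*} (Δ : ℕ) (hΔ : 2 ≤ Δ) (T : SimpleGraph W)
    (hInf : Infinite W) (hConn : T.Connected) (hAcyc : T.IsAcyclic) (hReg : IsRegular T Δ) :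
    epidemicRegion T = treeRegion Δ := by
  have hD : (2 : ℝ) ≤ (Δ : ℝ) := by exact_mod_cast hΔ
  have hDpos : (0 : ℝ) < (Δ : ℝ) := by linarith
  ext ⟨q, r⟩
  simp only [epidemicRegion, treeRegion, Set.mem_setOf_eq, Set.mem_union]
  constructor
  · rintro ⟨hq0, hq1, hr, hepi⟩
    by_contra hnot
    push_neg at hnot
    obtain ⟨h1, h2⟩ := hnot
    have h2' : 1 < 2 * q + Δ * r := h2 hq0 hr
    refine absurd hepi (not_epidemic hΔ hInf hConn hAcyc hReg hq0 hq1 hr h2' ?_)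
    intro hc
    have hrq : ((Δ : ℝ) - 1) / Δ * q ≤ r := by
      rw [div_mul_eq_mul_div, div_le_iff₀ hDpos]
      linarith
    have h3 := h1 hq0 hr hrq
    rw [div_lt_iff₀ hDpos] at h3
    linarith
  · rintro (⟨hq0, hr, hrq, hq⟩ | ⟨hq0, hr, h2qr⟩)
    · -- the first region
      have hq' : (Δ : ℝ) * q ≤ 1 := by
        have h := mul_le_mul_of_nonneg_left hq (le_of_lt hDpos)
        rw [mul_one_div, div_self (ne_of_gt hDpos)] at h
        exact h
      have hq1 : q < 1 := by nlinarith
      have hrq' : ((Δ : ℝ) - 1) * q ≤ (Δ : ℝ) * r := by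
        have h := mul_le_mul_of_nonneg_left hrq (le_of_lt hDpos)
        have hkey : (Δ : ℝ) * (((Δ : ℝ) - 1) / (Δ : ℝ) * q) = ((Δ : ℝ) - 1) * q := by
          field_simp
        rw [hkey] at h
        linarith
      exact ⟨hq0, hq1, hr, epidemic_region1 hΔ hInf hConn hAcyc hReg hq0 hq1 hr hq' hrq'⟩
    · -- the second region
      have hq1 : q < 1 := by nlinarith [mul_pos hDpos hr]
      refine ⟨hq0, hq1, hr, ?_⟩
      by_cases hc : (Δ : ℝ) * r ≤ ((Δ : ℝ) - 1) * q
      · exact epidemic_region2 hΔ hInf hConn hAcyc hReg hq0 hq1 hr h2qr hc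
      · push_neg at hc
        refine epidemic_region1 hΔ hInf hConn hAcyc hReg hq0 hq1 hr (by nlinarith)
          (le_of_lt hc)

end Contagion
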